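/- Let F : ℝ → [0,1] be the cumulative distribution function of a probability measure ν on ℝ, and let g : [0,1] → ℝ be increasing, left-continuous and bounded. Define ξ(x) = g(F(x)) if F(x) = F(x−), and ξ(x) = (1/(F(x) − F(x−))) ∫_{F(x−)}^{F(x)} g(y) dy if F(x) > F(x−). Then ∫ ξ dν = ∫₀¹ g(y) dy. -/

import Mathlib

open Set Filter Topology MeasureTheory

namespace Stmt5Aux

variable (ν : MeasureTheory.Measure ℝ) [IsProbabilityMeasure ν]

noncomputable def c : ℝ → ℝ := fun x => (ν (Iic x)).toReal
noncomputable def cm : ℝ → ℝ := fun x => (ν (Iio x)).toReal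

lemma c_eq (x : ℝ) : c ν x = ProbabilityTheory.cdf ν x :=
  (ProbabilityTheory.cdf_eq_real ν x).symm

lemma mono_c : Monotone (c ν) := by
  have := ProbabilityTheory.monotone_cdf ν
  intro a b hab
  rw [c_eq, c_eq]; exact this hab

lemma c_nonneg (x : ℝ) : 0 ≤ c ν x := ENNReal.toReal_nonneg

lemma c_le_one (x : ℝ) : c ν x ≤ 1 := by
  rw [c_eq]; exact ProbabilityTheory.cdf_le_one ν x

lemma cm_nonneg (x : ℝ) : 0 ≤ cm ν x := ENNReal.toReal_nonneg

lemma cm_le_c (x : ℝ) : cm ν x ≤ c ν x :=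
  ENNReal.toReal_mono (measure_ne_top ν _) (measure_mono Iio_subset_Iic_self)

lemma cm_le_one (x : ℝ) : cm ν x ≤ 1 := (cm_le_c ν x).trans (c_le_one ν x)

lemma mono_cm : Monotone (cm ν) := fun a b hab =>
  ENNReal.toReal_mono (measure_ne_top ν _) (measure_mono (Iio_subset_Iio hab))

lemma c_le_cm {x x' : ℝ} (h : x < x') : c ν x ≤ cm ν x' :=
  ENNReal.toReal_mono (measure_ne_top ν _) (measure_mono (Iic_subset_Iio.2 h))

lemma jump (x : ℝ) : c ν x = cm ν x + (ν {x}).toReal := by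
  have h : Iic x = Iio x ∪ {x} := by
    ext z; simp [le_iff_lt_or_eq]
  have hd : Disjoint (Iio x) ({x} : Set ℝ) := by
    simp only [Set.disjoint_left, mem_Iio, mem_singleton_iff]
    intro a ha
    exact ne_of_lt ha
  rw [c, cm]
  simp only [h, measure_union hd (measurableSet_singleton x)]
  rw [ENNReal.toReal_add (measure_ne_top ν _) (measure_ne_top ν _)]

lemma cm_le {x y : ℝ} (hy : 0 ≤ y) (h : ∀ z < x, c ν z ≤ y) : cm ν x ≤ y := by
  have hu : Iio x = ⋃ n : ℕ, Iic (x - (1 / (n + 1))) := by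
    ext z
    simp only [mem_Iio, mem_iUnion, mem_Iic]
    constructor
    · intro hz
      obtain ⟨n, hn⟩ := exists_nat_one_div_lt (sub_pos.2 hz)
      exact ⟨n, by linarith⟩
    · rintro ⟨n, hn⟩
      have : (0:ℝ) < 1 / (n + 1) := by positivity
      linarith
  have hdir : Directed (· ⊆ ·) fun n : ℕ => Iic (x - (1 / (n + 1 : ℝ))) := by
    intro m n
    rcases le_total m n with h' | h'
    · exact ⟨n, Iic_subset_Iic.2 (by
        have : (1 : ℝ) / (n + 1) ≤ 1 / (m + 1) := by
          apply one_div_le_one_div_of_le (by positivity)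
          exact_mod_cast by exact_mod_cast add_le_add_left (Nat.cast_le.2 h') 1
        linarith), subset_rfl⟩
    · exact ⟨m, subset_rfl, Iic_subset_Iic.2 (by
        have : (1 : ℝ) / (m + 1) ≤ 1 / (n + 1) := by
          apply one_div_le_one_div_of_le (by positivity)
          exact_mod_cast by exact_mod_cast add_le_add_left (Nat.cast_le.2 h') 1
        linarith)⟩
  have : ν (Iio x) ≤ ENNReal.ofReal y := by
    rw [hu, hdir.measure_iUnion]
    refine iSup_le fun n => ?_
    have hz : x - 1 / (n + 1 : ℝ) < x := by
      have : (0:ℝ) < 1 / (n + 1) := by positivity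
      linarith
    have := h _ hz
    calc ν (Iic (x - 1 / (n + 1 : ℝ)))
        = ENNReal.ofReal (c ν (x - 1 / (n + 1 : ℝ))) := by
          rw [c_eq]; exact (ProbabilityTheory.ofReal_cdf ν _).symm
      _ ≤ ENNReal.ofReal y := ENNReal.ofReal_le_ofReal this
  calc cm ν x ≤ (ENNReal.ofReal y).toReal :=
        ENNReal.toReal_mono ENNReal.ofReal_ne_top this
    _ = y := ENNReal.toReal_ofReal hy

noncomputable def Q : ℝ → ℝ := fun y =>
  if y ∈ Ioo (0:ℝ) 1 then sInf {x | y ≤ c ν x} else 0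

variable {ν}

lemma S_nonempty {y : ℝ} (hy : y ∈ Ioo (0:ℝ) 1) : {x | y ≤ c ν x}.Nonempty := by
  have h1 : Tendsto (c ν) atTop (𝓝 1) := by
    have := ProbabilityTheory.tendsto_cdf_atTop ν
    refine this.congr' ?_
    filter_upwards with x using (c_eq ν x).symm
  have : ∀ᶠ x in atTop, c ν x ∈ Ioi y :=
    h1.eventually (isOpen_Ioi.mem_nhds hy.2)
  obtain ⟨x, hx⟩ := this.exists
  exact ⟨x, show y ≤ c ν x from le_of_lt hx⟩

lemma S_bddBelow {y : ℝ} (hy : y ∈ Ioo (0:ℝ) 1) : BddBelow {x | y ≤ c ν x} := by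
  have h0 : Tendsto (c ν) atBot (𝓝 0) := by
    have := ProbabilityTheory.tendsto_cdf_atBot ν
    refine this.congr' ?_
    filter_upwards with x using (c_eq ν x).symm
  have : ∀ᶠ x in atBot, c ν x ∈ Iio y :=
    h0.eventually (isOpen_Iio.mem_nhds hy.1)
  obtain ⟨x₀, hx₀⟩ := this.exists
  refine ⟨x₀, fun z hz => ?_⟩
  by_contra hzx
  push_neg at hzx
  exact absurd (le_trans hz (mono_c ν hzx.le)) (not_le.2 hx₀)

lemma le_c_Q {y : ℝ} (hy : y ∈ Ioo (0:ℝ) 1) : y ≤ c ν (Q ν y) := by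
  rw [Q, if_pos hy]
  set S := {x | y ≤ c ν x} with hS
  set q := sInf S with hq
  by_contra hlt
  push_neg at hlt
  have hrc : ContinuousWithinAt (c ν) (Ici q) q := by
    have : ContinuousWithinAt (ProbabilityTheory.cdf ν) (Ici q) q :=
      (ProbabilityTheory.cdf ν).right_continuous q
    refine this.congr (fun x _ => c_eq ν x) (c_eq ν q)
  have hmem : {x | c ν x < y} ∈ 𝓝[≥] q :=
    hrc (isOpen_Iio.mem_nhds hlt)
  obtain ⟨u, hu, hsub⟩ := mem_nhdsGE_iff_exists_Ico_subset.1 hmem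
  have hub : ∀ z ∈ S, u ≤ z := by
    intro z hz
    by_contra hzu
    push_neg at hzu
    have hzq : q ≤ z := csInf_le (S_bddBelow hy) hz
    have hlt' : c ν z < y := hsub ⟨hzq, hzu⟩
    exact absurd (hz : y ≤ c ν z) (not_le.2 hlt')
  have : u ≤ q := le_csInf (S_nonempty hy) hub
  exact absurd hu (not_lt.2 this)

lemma cm_Q_le {y : ℝ} (hy : y ∈ Ioo (0:ℝ) 1) : cm ν (Q ν y) ≤ y := by
  rw [Q, if_pos hy]
  refine cm_le ν hy.1.le fun z hz => ?_
  by_contra hc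
  push_neg at hc
  exact absurd (csInf_le (S_bddBelow hy) hc.le) (not_le.2 hz)

lemma Q_le_iff {y x : ℝ} (hy : y ∈ Ioo (0:ℝ) 1) : Q ν y ≤ x ↔ y ≤ c ν x := by
  constructor
  · intro h
    exact le_trans (le_c_Q hy) (mono_c ν h)
  · intro h
    rw [Q, if_pos hy]
    exact csInf_le (S_bddBelow hy) h

lemma measurable_Q : Measurable (Q ν) := by
  apply measurable_of_Iic
  intro x
  by_cases hx : (0:ℝ) ≤ x
  · have : Q ν ⁻¹' Iic x = (Ioo 0 1 ∩ Iic (c ν x)) ∪ (Ioo 0 1)ᶜ := by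
      ext y
      simp only [mem_preimage, mem_Iic, mem_union, mem_inter_iff, mem_compl_iff]
      by_cases hy : y ∈ Ioo (0:ℝ) 1
      · simp only [hy, not_true_eq_false, or_false, true_and]
        exact Q_le_iff hy
      · simp only [hy, not_false_eq_true, or_true, iff_true]
        rw [Q, if_neg hy]; exact hx
    rw [this]
    exact ((measurableSet_Ioo.inter measurableSet_Iic).union
      measurableSet_Ioo.compl)
  · push_neg at hx
    have : Q ν ⁻¹' Iic x = Ioo 0 1 ∩ Iic (c ν x) := by
      ext y
      simp only [mem_preimage, mem_Iic, mem_inter_iff]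
      by_cases hy : y ∈ Ioo (0:ℝ) 1
      · simp only [hy, true_and]
        exact Q_le_iff hy
      · simp only [hy, false_and, iff_false]
        rw [Q, if_neg hy]
        exact not_le.2 hx
    rw [this]
    exact measurableSet_Ioo.inter measurableSet_Iic

lemma map_Q : Measure.map (Q ν) (volume.restrict (Ioo 0 1)) = ν := by
  have hfin : IsFiniteMeasure (volume.restrict (Ioo (0:ℝ) 1)) :=
    ⟨by simp [Real.volume_Ioo]⟩
  have hmapfin : IsFiniteMeasure (Measure.map (Q ν) (volume.restrict (Ioo 0 1))) :=
    Measure.isFiniteMeasure_map _ _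
  refine Measure.ext_of_Iic _ _ fun x => ?_
  rw [Measure.map_apply measurable_Q measurableSet_Iic,
    Measure.restrict_apply (measurable_Q measurableSet_Iic)]
  have hpre : Q ν ⁻¹' Iic x ∩ Ioo 0 1 = Ioo 0 1 ∩ Iic (c ν x) := by
    ext y
    simp only [mem_inter_iff, mem_preimage, mem_Iic]
    constructor
    · rintro ⟨h1, h2⟩; exact ⟨h2, (Q_le_iff h2).1 h1⟩
    · rintro ⟨h1, h2⟩; exact ⟨(Q_le_iff h1).2 h2, h1⟩
  rw [hpre]
  have hcx0 := c_nonneg ν x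
  have hcx1 := c_le_one ν x
  have hν : ν (Iic x) = ENNReal.ofReal (c ν x) := by
    rw [c_eq]; exact (ProbabilityTheory.ofReal_cdf ν x).symm
  rcases lt_or_eq_of_le hcx1 with h1 | h1
  · have : Ioo (0:ℝ) 1 ∩ Iic (c ν x) = Ioc 0 (c ν x) := by
      ext y
      simp only [mem_inter_iff, mem_Ioo, mem_Iic, mem_Ioc]
      constructor
      · rintro ⟨⟨a, _⟩, b⟩; exact ⟨a, b⟩
      · rintro ⟨a, b⟩; exact ⟨⟨a, lt_of_le_of_lt b h1⟩, b⟩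
    rw [this, Real.volume_Ioc, hν, sub_zero]
  · have : Ioo (0:ℝ) 1 ∩ Iic (c ν x) = Ioo 0 1 := by
      rw [inter_eq_left]
      intro y hy
      rw [← h1] at hy
      exact le_of_lt hy.2
    rw [this, Real.volume_Ioo, hν, ← h1, sub_zero]

end Stmt5Aux
/-- The tie-averaged payoff integrates to the average reward:
`∫ ξ dν = ∫₀¹ g`. -/
theorem stmt5 (ν : MeasureTheory.Measure ℝ) [MeasureTheory.IsProbabilityMeasure ν]
    (g : ℝ → ℝ)
    (hmono : MonotoneOn g (Set.Icc 0 1))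
    (hlc : ∀ y ∈ Set.Ioc (0:ℝ) 1,
      Filter.Tendsto g (nhdsWithin y (Set.Iio y)) (nhds (g y)))
    (hbdd : ∃ M, ∀ y ∈ Set.Icc (0:ℝ) 1, |g y| ≤ M)
    (F Fm ξ : ℝ → ℝ)
    (hF : ∀ x, F x = (ν (Set.Iic x)).toReal)
    (hFm : ∀ x, Fm x = (ν (Set.Iio x)).toReal)
    (hξ : ∀ x, ξ x = if F x = Fm x then g (F x)
      else (1/(F x - Fm x)) * ∫ y in (Fm x)..(F x), g y) :
    ∫ x, ξ x ∂ν = ∫ y in (0:ℝ)..1, g y := by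
  have hFc : F = Stmt5Aux.c ν := funext fun x => hF x
  have hFmc : Fm = Stmt5Aux.cm ν := funext fun x => hFm x
  subst hFc hFmc
  set C := Stmt5Aux.c ν with hCdef
  set Cm := Stmt5Aux.cm ν with hCmdef
  set Q := Stmt5Aux.Q ν with hQdef
  obtain ⟨M, hM⟩ := hbdd
  -- basic facts about C, Cm
  have hc0 : ∀ x, 0 ≤ C x := Stmt5Aux.c_nonneg ν
  have hc1 : ∀ x, C x ≤ 1 := Stmt5Aux.c_le_one ν
  have hcm0 : ∀ x, 0 ≤ Cm x := Stmt5Aux.cm_nonneg ν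
  have hcmle : ∀ x, Cm x ≤ C x := Stmt5Aux.cm_le_c ν
  -- the clamped version of g
  set g' : ℝ → ℝ := fun y => g (max 0 (min y 1)) with hg'def
  have hclamp : ∀ y : ℝ, max 0 (min y 1) ∈ Set.Icc (0:ℝ) 1 := fun y =>
    ⟨le_max_left _ _, max_le (by norm_num) (min_le_right _ _)⟩
  have hg'mono : Monotone g' := fun a b hab =>
    hmono (hclamp a) (hclamp b) (max_le_max le_rfl (min_le_min hab le_rfl))
  have hg'eq : ∀ y ∈ Set.Icc (0:ℝ) 1, g' y = g y := by
    intro y hy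
    rw [hg'def]
    simp only
    rw [min_eq_left hy.2, max_eq_right hy.1]
  have hg'bdd : ∀ y, |g' y| ≤ M := fun y => hM _ (hclamp y)
  have hM0 : 0 ≤ M := le_trans (abs_nonneg _) (hg'bdd 0)
  have hg'int : ∀ a b : ℝ, IntervalIntegrable g' volume a b := fun a b =>
    hg'mono.intervalIntegrable
  have hg'meas : Measurable g' := hg'mono.measurable
  -- rewrite ξ using g'
  have hξ' : ∀ x, ξ x = if C x = Cm x then g' (C x)
      else (1/(C x - Cm x)) * ∫ y in (Cm x)..(C x), g' y := by
    intro x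
    rw [hξ x]
    have huIcc : Set.uIcc (Cm x) (C x) ⊆ Set.Icc (0:ℝ) 1 := by
      rw [Set.uIcc_of_le (hcmle x)]
      exact Set.Icc_subset_Icc (hcm0 x) (hc1 x)
    have hI : ∫ y in (Cm x)..(C x), g y = ∫ y in (Cm x)..(C x), g' y :=
      intervalIntegral.integral_congr fun y hy => (hg'eq y (huIcc hy)).symm
    rw [hI, ← hg'eq (C x) ⟨hc0 x, hc1 x⟩]
  -- measurability of ξ
  have hcmeas : Measurable C := (Stmt5Aux.mono_c ν).measurable
  have hcmmeas : Measurable Cm := (Stmt5Aux.mono_cm ν).measurable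
  set H : ℝ → ℝ := fun t => ∫ y in (0:ℝ)..t, g' y with hHdef
  have hHcont : Continuous H := intervalIntegral.continuous_primitive hg'int 0
  have hint_eq : ∀ x : ℝ, ∫ y in (Cm x)..(C x), g' y = H (C x) - H (Cm x) :=
    fun x => (intervalIntegral.integral_interval_sub_left (hg'int 0 (C x))
      (hg'int 0 (Cm x))).symm
  have hξmeas : Measurable ξ := by
    have hrepr : ξ = fun x => if C x = Cm x then g' (C x)
        else (1/(C x - Cm x)) * (H (C x) - H (Cm x)) := by
      funext x
      rw [hξ' x, hint_eq x]
    rw [hrepr]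
    refine Measurable.ite (measurableSet_eq_fun hcmeas hcmmeas)
      (hg'meas.comp hcmeas) ?_
    exact (measurable_const.div (hcmeas.sub hcmmeas)).mul
      ((hHcont.measurable.comp hcmeas).sub (hHcont.measurable.comp hcmmeas))
  -- boundedness of ξ
  have hξbdd : ∀ x, |ξ x| ≤ M := by
    intro x
    rw [hξ' x]
    by_cases h : C x = Cm x
    · rw [if_pos h]; exact hg'bdd _
    · rw [if_neg h]
      have hlt : Cm x < C x := lt_of_le_of_ne (hcmle x) (fun h' => h h'.symm)
      have hΔ : 0 < C x - Cm x := sub_pos.2 hlt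
      have hb : ‖∫ y in (Cm x)..(C x), g' y‖ ≤ M * |C x - Cm x| :=
        intervalIntegral.norm_integral_le_of_norm_le_const fun y _ => by
          rw [Real.norm_eq_abs]; exact hg'bdd y
      calc |1/(C x - Cm x) * ∫ y in (Cm x)..(C x), g' y|
          = (1/(C x - Cm x)) * |∫ y in (Cm x)..(C x), g' y| := by
            rw [abs_mul, abs_of_pos (by positivity)]
        _ ≤ (1/(C x - Cm x)) * (M * (C x - Cm x)) := by
            refine mul_le_mul_of_nonneg_left ?_ (by positivity)
            rw [← Real.norm_eq_abs]
            calc ‖∫ y in (Cm x)..(C x), g' y‖ ≤ M * |C x - Cm x| := hb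
              _ = M * (C x - Cm x) := by rw [abs_of_pos hΔ]
        _ = M := by field_simp
  -- transfer to (0,1) via Q
  haveI hfinIoo : MeasureTheory.IsFiniteMeasure (volume.restrict (Set.Ioo (0:ℝ) 1)) :=
    ⟨by simp [Real.volume_Ioo]⟩
  have hQmeas : Measurable Q := Stmt5Aux.measurable_Q
  have step1 : ∫ x, ξ x ∂ν = ∫ y in Set.Ioo (0:ℝ) 1, ξ (Q y) := by
    conv_lhs => rw [← Stmt5Aux.map_Q (ν := ν)]
    exact MeasureTheory.integral_map hQmeas.aemeasurable hξmeas.aestronglyMeasurable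
  have step2 : ∫ y in (0:ℝ)..1, g y = ∫ y in Set.Ioo (0:ℝ) 1, g' y := by
    have e1 : ∫ y in Set.Ioo (0:ℝ) 1, g' y = ∫ y in Set.Ioc (0:ℝ) 1, g' y :=
      MeasureTheory.setIntegral_congr_set MeasureTheory.Ioo_ae_eq_Ioc
    have e2 : ∫ y in Set.Ioc (0:ℝ) 1, g' y = ∫ y in Set.Ioc (0:ℝ) 1, g y :=
      MeasureTheory.setIntegral_congr_fun measurableSet_Ioc fun y hy =>
        hg'eq y ⟨le_of_lt hy.1, hy.2⟩
    rw [intervalIntegral.integral_of_le (by norm_num : (0:ℝ) ≤ 1), e1, e2]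
  -- atoms
  set A : Set ℝ := {x | Cm x < C x} with hAdef
  have hAatom : ∀ x, x ∈ A ↔ 0 < ν {x} := by
    intro x
    simp only [hAdef, Set.mem_setOf_eq]
    rw [hCdef, hCmdef]
    rw [Stmt5Aux.jump ν x]
    rw [lt_add_iff_pos_right]
    rw [ENNReal.toReal_pos_iff]
    exact ⟨fun h => h.1, fun h => ⟨h, measure_lt_top ν _⟩⟩
  have hAcnt : A.Countable := by
    have h := MeasureTheory.Measure.countable_meas_pos_of_disjoint_of_meas_iUnion_ne_top
      (ι := ℝ) ν (As := fun x => {x}) (fun i => measurableSet_singleton i)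
      (fun i j hij => by
        simp only [Function.onFun, Set.disjoint_singleton]
        exact hij)
      (measure_ne_top ν _)
    refine h.mono ?_
    intro x hx
    exact (hAatom x).1 hx
  set D : Set ℝ := ⋃ x ∈ A, Set.Ioo (Cm x) (C x) with hDdef
  have hDmeas : MeasurableSet D := (isOpen_biUnion fun x _ => isOpen_Ioo).measurableSet
  have hDsub : D ⊆ Set.Ioo (0:ℝ) 1 := by
    intro y hy
    rw [hDdef] at hy
    simp only [Set.mem_iUnion, Set.mem_Ioo] at hy
    obtain ⟨x, _, h1, h2⟩ := hy
    exact ⟨lt_of_le_of_lt (hcm0 x) h1, lt_of_lt_of_le h2 (hc1 x)⟩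
  -- Q is constant on jump intervals
  have hQjump : ∀ x ∈ A, ∀ y ∈ Set.Ioo (Cm x) (C x), Q y = x := by
    intro x hx y hy
    have hy01 : y ∈ Set.Ioo (0:ℝ) 1 :=
      ⟨lt_of_le_of_lt (hcm0 x) hy.1, lt_of_lt_of_le hy.2 (hc1 x)⟩
    have h1 : Q y ≤ x := (Stmt5Aux.Q_le_iff hy01).2 hy.2.le
    have h2 : x ≤ Q y := by
      by_contra h
      push_neg at h
      have h3 : C (Q y) ≤ Cm x := Stmt5Aux.c_le_cm ν h
      have h4 : y ≤ C (Q y) := Stmt5Aux.le_c_Q hy01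
      have h5 := hy.1
      linarith
    exact le_antisymm h1 h2
  -- integrability
  have hintxiQ : MeasureTheory.IntegrableOn (fun y => ξ (Q y)) (Set.Ioo 0 1) volume := by
    refine ⟨(hξmeas.comp hQmeas).aestronglyMeasurable, ?_⟩
    refine MeasureTheory.HasFiniteIntegral.of_bounded (C := M) ?_
    filter_upwards with y
    rw [Real.norm_eq_abs]
    exact hξbdd _
  have hintg' : MeasureTheory.IntegrableOn g' (Set.Ioo 0 1) volume := by
    refine ⟨hg'meas.aestronglyMeasurable, ?_⟩
    refine MeasureTheory.HasFiniteIntegral.of_bounded (C := M) ?_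
    filter_upwards with y
    rw [Real.norm_eq_abs]
    exact hg'bdd _
  -- splitting the integral over (0,1) into D and its complement
  have split : ∀ f : ℝ → ℝ, MeasureTheory.IntegrableOn f (Set.Ioo 0 1) volume →
      ∫ y in Set.Ioo (0:ℝ) 1, f y =
        (∫ y in D, f y) + ∫ y in Set.Ioo (0:ℝ) 1 \ D, f y := by
    intro f hf
    rw [← MeasureTheory.integral_inter_add_diff hDmeas hf,
      Set.inter_eq_right.mpr hDsub]
  -- equality off D (a.e.)
  have hEzero : volume ((C '' A) ∪ (Cm '' A)) = 0 :=
    Set.Countable.measure_zero ((hAcnt.image C).union (hAcnt.image Cm)) _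
  have offD : ∫ y in Set.Ioo (0:ℝ) 1 \ D, ξ (Q y)
      = ∫ y in Set.Ioo (0:ℝ) 1 \ D, g' y := by
    refine MeasureTheory.setIntegral_congr_ae (measurableSet_Ioo.diff hDmeas) ?_
    have hae : ∀ᵐ y : ℝ, y ∉ (C '' A) ∪ (Cm '' A) := by
      rw [← MeasureTheory.compl_mem_ae_iff] at hEzero
      exact hEzero
    filter_upwards [hae] with y hyE hymem
    obtain ⟨hy01, hyD⟩ := hymem
    show ξ (Q y) = g' y
    have hcq : y ≤ C (Q y) := Stmt5Aux.le_c_Q hy01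
    have hcmq : Cm (Q y) ≤ y := Stmt5Aux.cm_Q_le hy01
    by_cases hq' : C (Q y) = Cm (Q y)
    · have hyq : C (Q y) = y := le_antisymm (le_of_eq_of_le hq' hcmq) hcq
      rw [hξ' (Q y), if_pos hq', hyq]
    · have hlt : Cm (Q y) < C (Q y) :=
        lt_of_le_of_ne (hcmle (Q y)) (fun h' => hq' h'.symm)
      have hqA : Q y ∈ A := hlt
      exfalso
      rcases lt_or_eq_of_le hcq with h1 | h1
      · rcases lt_or_eq_of_le hcmq with h2 | h2
        · refine hyD ?_
          rw [hDdef]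
          exact Set.mem_biUnion hqA ⟨h2, h1⟩
        · exact hyE (Or.inr ⟨Q y, hqA, h2⟩)
      · exact hyE (Or.inl ⟨Q y, hqA, h1.symm⟩)
  -- equality on D
  haveI hAcnt' : Countable ↥A := hAcnt.to_subtype
  have hDiUnion : D = ⋃ x : A, Set.Ioo (Cm x) (C x) := by
    rw [hDdef, Set.biUnion_eq_iUnion]
  have hdisj : Pairwise (Function.onFun Disjoint
      fun x : A => Set.Ioo (Cm (x:ℝ)) (C (x:ℝ))) := by
    rintro ⟨a, ha⟩ ⟨b, hb⟩ hab
    have hne : a ≠ b := fun h => hab (Subtype.ext h)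
    simp only [Function.onFun]
    rcases hne.lt_or_gt with h | h
    · have hle : C a ≤ Cm b := Stmt5Aux.c_le_cm ν h
      rw [Set.disjoint_left]
      rintro y ⟨_, hy2⟩ ⟨hy3, _⟩
      exact absurd (lt_trans hy2 (lt_of_le_of_lt hle hy3)) (lt_irrefl y)
    · have hle : C b ≤ Cm a := Stmt5Aux.c_le_cm ν h
      rw [Set.disjoint_left]
      rintro y ⟨hy1, _⟩ ⟨_, hy4⟩
      exact absurd (lt_trans hy4 (lt_of_le_of_lt hle hy1)) (lt_irrefl y)
  have comp_eq : ∀ x : A, ∫ y in Set.Ioo (Cm (x:ℝ)) (C (x:ℝ)), ξ (Q y)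
      = ∫ y in Set.Ioo (Cm (x:ℝ)) (C (x:ℝ)), g' y := by
    rintro ⟨x, hx⟩
    have hxlt : Cm x < C x := hx
    have hne : ¬ C x = Cm x := ne_of_gt hxlt
    have hL : ∫ y in Set.Ioo (Cm x) (C x), ξ (Q y) = (C x - Cm x) * ξ x := by
      rw [MeasureTheory.setIntegral_congr_fun measurableSet_Ioo
        (fun y hy => by show ξ (Q y) = ξ x; rw [hQjump x hx y hy] : Set.EqOn (fun y => ξ (Q y))
          (fun _ => ξ x) (Set.Ioo (Cm x) (C x)))]
      rw [MeasureTheory.setIntegral_const, Real.volume_real_Ioo_of_le (by linarith), smul_eq_mul]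
    have hR : ∫ y in Set.Ioo (Cm x) (C x), g' y = ∫ y in (Cm x)..(C x), g' y := by
      rw [intervalIntegral.integral_of_le hxlt.le]
      exact MeasureTheory.setIntegral_congr_set MeasureTheory.Ioo_ae_eq_Ioc
    rw [hL, hR, hξ' x, if_neg hne, ← mul_assoc, mul_one_div,
      div_self (sub_ne_zero.2 (ne_of_gt hxlt)), one_mul]
  have onD : ∫ y in D, ξ (Q y) = ∫ y in D, g' y := by
    rw [hDiUnion]
    rw [MeasureTheory.integral_iUnion (fun _ => measurableSet_Ioo) hdisj
      (hDiUnion ▸ hintxiQ.mono_set hDsub),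
      MeasureTheory.integral_iUnion (fun _ => measurableSet_Ioo) hdisj
      (hDiUnion ▸ hintg'.mono_set hDsub)]
    exact tsum_congr comp_eq
  rw [step1, step2, split _ hintxiQ, split _ hintg', offD, onD]
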